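/- The stabilizer in PGL(3,q) of the point P = (1,1,τ) of PG(2,q^3), where τ ∉ GF(q), has order q^2(q-1); consequently the orbit of P under PGL(3,q) has size q(q^3-1)(q+1). -/

import Mathlib

open Matrix IntermediateField



lemma stmt7_key (p n q : ℕ) (hp : p.Prime) (hn : 0 < n) (hq : q = p ^ n)
    (k F : Type) [Field k] [Field F] [Algebra k F] [Fintype k] [Fintype F]
    (hk : Fintype.card k = q) (hF : Fintype.card F = q ^ 3)
    (τ : F) (hτ : τ ∉ Set.range (algebraMap k F)) :
    ∀ a b c : k, algebraMap k F a + algebraMap k F b * τ + algebraMap k F c * τ ^ 2 = 0 →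
      a = 0 ∧ b = 0 ∧ c = 0 := by
  have hq2 : 2 ≤ q := hq ▸ Nat.one_lt_pow hn.ne' hp.one_lt
  have hfr : Module.finrank k F = 3 := by
    have h1 : Fintype.card F = q ^ Module.finrank k F := hk ▸ Module.card_eq_pow_finrank
    rw [hF] at h1
    exact Nat.pow_right_injective hq2 h1.symm
  have hFD : FiniteDimensional k F := FiniteDimensional.of_finrank_pos (by omega)
  have hint : IsIntegral k τ := IsIntegral.of_finite k τ
  have hdeg : (minpoly k τ).natDegree = 3 := by
    have h1 : (minpoly k τ).natDegree = Module.finrank k k⟮τ⟯ :=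
      (IntermediateField.adjoin.finrank hint).symm
    have h2 : Module.finrank k k⟮τ⟯ ∣ 3 := by
      rw [← hfr]
      exact ⟨Module.finrank k⟮τ⟯ F, (Module.finrank_mul_finrank k k⟮τ⟯ F).symm⟩
    have h3 : Module.finrank k k⟮τ⟯ ≠ 1 := by
      intro h
      rw [IntermediateField.finrank_eq_one_iff] at h
      exact hτ (IntermediateField.mem_bot.mp (h ▸ IntermediateField.mem_adjoin_simple_self k τ))
    rcases (Nat.Prime.eq_one_or_self_of_dvd Nat.prime_three _ h2) with h | h <;> omega
  intro a b c habc
  by_contra hcon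
  set P : Polynomial k := Polynomial.C a + Polynomial.C b * Polynomial.X
      + Polynomial.C c * Polynomial.X ^ 2 with hP
  have hPne : P ≠ 0 := by
    intro h
    apply hcon
    have h0 := congrArg (Polynomial.coeff · 0) h
    have h1 := congrArg (Polynomial.coeff · 1) h
    have h2 := congrArg (Polynomial.coeff · 2) h
    simp [hP, Polynomial.coeff_add, Polynomial.coeff_C] at h0 h1 h2
    exact ⟨h0, h1, h2⟩
  have hev : Polynomial.aeval τ P = 0 := by
    rw [hP]
    simp only [map_add, _root_.map_mul, map_pow, Polynomial.aeval_C, Polynomial.aeval_X]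
    rw [← habc]
  have hle := minpoly.degree_le_of_ne_zero k τ hPne hev
  have hdegP : P.degree ≤ 2 := by
    apply le_trans (Polynomial.degree_add_le _ _) ?_
    simp only [sup_le_iff]
    constructor
    · apply le_trans (Polynomial.degree_add_le _ _)
      simp only [sup_le_iff]
      refine ⟨le_trans Polynomial.degree_C_le (by norm_num), ?_⟩
      apply le_trans (Polynomial.degree_mul_le _ _)
      calc Polynomial.degree (Polynomial.C b) + Polynomial.degree (Polynomial.X : Polynomial k)
          ≤ 0 + 1 := add_le_add Polynomial.degree_C_le Polynomial.degree_X_le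
        _ ≤ 2 := by norm_num
    · apply le_trans (Polynomial.degree_mul_le _ _)
      calc Polynomial.degree (Polynomial.C c) + Polynomial.degree ((Polynomial.X : Polynomial k) ^ 2)
          ≤ 0 + 2 := add_le_add Polynomial.degree_C_le (by simpa using Polynomial.degree_pow_le (Polynomial.X : Polynomial k) 2)
        _ ≤ 2 := by norm_num
  have : (minpoly k τ).degree ≤ 2 := le_trans hle hdegP
  have hd3 : (minpoly k τ).degree = 3 := by
    rw [Polynomial.degree_eq_natDegree (minpoly.ne_zero hint), hdeg]; rfl
  rw [hd3] at this
  norm_num at this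


lemma stmt7_cond_iff (k F : Type) [Field k] [Field F] [Algebra k F] (τ : F)
    (key : ∀ a b c : k, algebraMap k F a + algebraMap k F b * τ + algebraMap k F c * τ ^ 2 = 0 →
      a = 0 ∧ b = 0 ∧ c = 0)
    (A : Matrix (Fin 3) (Fin 3) k) :
    (∃ c : F, (A.map (algebraMap k F)).mulVec ![1, 1, τ] = c • ![1, 1, τ]) ↔
      (A 0 2 = 0 ∧ A 1 2 = 0 ∧ A 0 0 + A 0 1 = A 2 2 ∧ A 1 0 + A 1 1 = A 2 2
        ∧ A 2 0 + A 2 1 = 0) := by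
  set f := algebraMap k F with hf
  have hv : ∀ i, (A.map f).mulVec ![1, 1, τ] i
      = f (A i 0) + f (A i 1) + f (A i 2) * τ := by
    intro i
    simp [Matrix.mulVec, dotProduct, Fin.sum_univ_three]
  constructor
  · rintro ⟨c, h⟩
    have e0 : f (A 0 0) + f (A 0 1) + f (A 0 2) * τ = c := by
      have := congrFun h 0; rw [hv 0] at this; simpa using this
    have e1 : f (A 1 0) + f (A 1 1) + f (A 1 2) * τ = c := by
      have := congrFun h 1; rw [hv 1] at this; simpa using this
    have e2 : f (A 2 0) + f (A 2 1) + f (A 2 2) * τ = c * τ := by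
      have := congrFun h 2; rw [hv 2] at this; simpa using this
    obtain ⟨ha, hb, hc⟩ := key (A 2 0 + A 2 1) (A 2 2 - A 0 0 - A 0 1) (-(A 0 2)) (by
      simp only [map_add, map_sub, map_neg]
      linear_combination e2 - τ * e0)
    obtain ⟨hd, he, -⟩ := key (A 1 0 + A 1 1 - A 0 0 - A 0 1) (A 1 2 - A 0 2) 0 (by
      simp only [map_add, map_sub, map_zero]
      linear_combination e1 - e0)
    have hA02 : A 0 2 = 0 := neg_eq_zero.mp hc
    refine ⟨hA02, by linear_combination he + hA02, by linear_combination -hb,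
      by linear_combination hd - hb, ha⟩
  · rintro ⟨h1, h2, h3, h4, h5⟩
    refine ⟨f (A 2 2), ?_⟩
    funext i
    fin_cases i <;>
      simp only [hv, Pi.smul_apply, smul_eq_mul] <;>
      simp [Matrix.cons_val_zero, Matrix.cons_val_one]
    · rw [h1, ← h3, map_add, map_zero]; ring
    · rw [h2, ← h4, map_add, map_zero]; ring
    · have : f (A 2 0) + f (A 2 1) = 0 := by rw [← map_add, h5, map_zero]
      linear_combination this

section
variable {k F : Type} [Field k] [Field F] [Algebra k F]


lemma stmt7_mapmul (B B' : GL (Fin 3) k) :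
    ((B * B' : GL (Fin 3) k) : Matrix (Fin 3) (Fin 3) k).map (algebraMap k F)
      = ((B : Matrix (Fin 3) (Fin 3) k).map (algebraMap k F))
        * ((B' : Matrix (Fin 3) (Fin 3) k).map (algebraMap k F)) := by
  rw [Units.val_mul, Matrix.map_mul]

lemma stmt7_inv_eq (τ : F) (B : GL (Fin 3) k) (c : F)
    (h : ((B : Matrix (Fin 3) (Fin 3) k).map (algebraMap k F)).mulVec ![1, 1, τ]
      = c • ![1, 1, τ]) :
    ![1, 1, τ] = c • (((B⁻¹ : GL (Fin 3) k) : Matrix (Fin 3) (Fin 3) k).map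
      (algebraMap k F)).mulVec ![1, 1, τ] := by
  have h1 : (((B⁻¹ : GL (Fin 3) k) : Matrix (Fin 3) (Fin 3) k).map (algebraMap k F))
      * ((B : Matrix (Fin 3) (Fin 3) k).map (algebraMap k F)) = 1 := by
    rw [← stmt7_mapmul, inv_mul_cancel, Units.val_one, Matrix.map_one _ (map_zero _) (map_one _)]
  calc ![1, 1, τ] = (1 : Matrix (Fin 3) (Fin 3) F).mulVec ![1, 1, τ] := by
        rw [Matrix.one_mulVec]
    _ = _ := by
        rw [← h1, ← Matrix.mulVec_mulVec, h, Matrix.mulVec_smul]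

lemma stmt7_c_ne (τ : F) (B : GL (Fin 3) k) (c : F)
    (h : ((B : Matrix (Fin 3) (Fin 3) k).map (algebraMap k F)).mulVec ![1, 1, τ]
      = c • ![1, 1, τ]) : c ≠ 0 := by
  intro hc
  have := congrFun (stmt7_inv_eq τ B c h) 0
  rw [hc] at this
  simp at this

/-- The stabilizer subgroup. -/
def stmt7_H (τ : F) : Subgroup (GL (Fin 3) k) where
  carrier := {B | ∃ c : F,
    ((B : Matrix (Fin 3) (Fin 3) k).map (algebraMap k F)).mulVec ![1, 1, τ] = c • ![1, 1, τ]}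
  one_mem' := ⟨1, by simp⟩
  mul_mem' := by
    rintro B B' ⟨c, hc⟩ ⟨c', hc'⟩
    exact ⟨c * c', by rw [stmt7_mapmul, ← Matrix.mulVec_mulVec, hc', Matrix.mulVec_smul, hc,
      smul_smul, mul_comm]⟩
  inv_mem' := by
    rintro B ⟨c, hc⟩
    refine ⟨c⁻¹, ?_⟩
    have h0 := stmt7_c_ne τ B c hc
    have := stmt7_inv_eq τ B c hc
    conv_rhs => rw [this]
    rw [smul_smul, inv_mul_cancel₀ h0, one_smul]

lemma stmt7_mem_H (τ : F) (B : GL (Fin 3) k) : B ∈ stmt7_H τ ↔ ∃ c : F,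
    ((B : Matrix (Fin 3) (Fin 3) k).map (algebraMap k F)).mulVec ![1, 1, τ]
      = c • ![1, 1, τ] := Iff.rfl



def stmt7_cond (A : Matrix (Fin 3) (Fin 3) k) : Prop :=
  A 0 2 = 0 ∧ A 1 2 = 0 ∧ A 0 0 + A 0 1 = A 2 2 ∧ A 1 0 + A 1 1 = A 2 2 ∧ A 2 0 + A 2 1 = 0

def stmt7_mat (s u : kˣ) (b g : k) : Matrix (Fin 3) (Fin 3) k :=
  !![(u : k) + b, (s : k) - ((u : k) + b), 0; b, (s : k) - b, 0; -g, g, (s : k)]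

lemma stmt7_mat_det (s u : kˣ) (b g : k) :
    (stmt7_mat s u b g).det = (s : k) ^ 2 * (u : k) := by
  simp [stmt7_mat, Matrix.det_fin_three]; ring

lemma stmt7_mat_isUnit (s u : kˣ) (b g : k) : IsUnit (stmt7_mat s u b g) := by
  rw [Matrix.isUnit_iff_isUnit_det, stmt7_mat_det]
  exact (s.isUnit.pow 2).mul u.isUnit

noncomputable def stmt7_Phi (x : kˣ × kˣ × k × k) : GL (Fin 3) k :=
  (stmt7_mat_isUnit x.1 x.2.1 x.2.2.1 x.2.2.2).unit

lemma stmt7_Phi_coe (x : kˣ × kˣ × k × k) :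
    (stmt7_Phi x : Matrix (Fin 3) (Fin 3) k) = stmt7_mat x.1 x.2.1 x.2.2.1 x.2.2.2 :=
  IsUnit.unit_spec _

lemma stmt7_cond_det (A : Matrix (Fin 3) (Fin 3) k) (h : stmt7_cond A) :
    A.det = A 2 2 ^ 2 * (A 0 0 - A 1 0) := by
  obtain ⟨h1, h2, h3, h4, h5⟩ := h
  have e01 : A 0 1 = A 2 2 - A 0 0 := by linear_combination h3
  have e11 : A 1 1 = A 2 2 - A 1 0 := by linear_combination h4
  have e20 : A 2 0 = -(A 2 1) := by linear_combination h5
  rw [Matrix.det_fin_three, h1, h2, e01, e11, e20]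
  ring

lemma stmt7_cond_Phi (x : kˣ × kˣ × k × k) :
    stmt7_cond (stmt7_Phi x : Matrix (Fin 3) (Fin 3) k) := by
  rw [stmt7_Phi_coe]
  refine ⟨?_, ?_, ?_, ?_, ?_⟩ <;> simp [stmt7_mat] <;> ring

noncomputable def stmt7_equiv :
    (kˣ × kˣ × k × k) ≃ {B : GL (Fin 3) k // stmt7_cond (B : Matrix (Fin 3) (Fin 3) k)} := by
  apply Equiv.ofBijective (fun x => ⟨stmt7_Phi x, stmt7_cond_Phi x⟩)
  constructor
  · rintro ⟨s, u, b, g⟩ ⟨s', u', b', g'⟩ h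
    have h2 : (stmt7_Phi (s, u, b, g) : Matrix (Fin 3) (Fin 3) k)
        = (stmt7_Phi (s', u', b', g') : Matrix (Fin 3) (Fin 3) k) := by
      exact congrArg (fun z => ((z : {B : GL (Fin 3) k // _}) : GL (Fin 3) k).val) h
    rw [stmt7_Phi_coe, stmt7_Phi_coe] at h2
    have e22 := congrFun (congrFun h2 2) 2
    have e10 := congrFun (congrFun h2 1) 0
    have e21 := congrFun (congrFun h2 2) 1
    have e00 := congrFun (congrFun h2 0) 0
    simp [stmt7_mat] at e22 e10 e21 e00
    have hs : s = s' := Units.ext e22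
    have hb : b = b' := e10
    have hu : u = u' := Units.ext (by rw [hb] at e00; exact add_right_cancel e00)
    exact Prod.ext hs (Prod.ext hu (Prod.ext hb e21))
  · rintro ⟨B, hB⟩
    have hdet : IsUnit (B : Matrix (Fin 3) (Fin 3) k).det :=
      (Matrix.isUnit_iff_isUnit_det _).mp B.isUnit
    rw [stmt7_cond_det _ hB] at hdet
    have hs : (B : Matrix (Fin 3) (Fin 3) k) 2 2 ≠ 0 := by
      intro h; rw [h] at hdet; simp at hdet
    have hu : (B : Matrix (Fin 3) (Fin 3) k) 0 0 - (B : Matrix (Fin 3) (Fin 3) k) 1 0 ≠ 0 := by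
      intro h; rw [h] at hdet; simp at hdet
    refine ⟨(Units.mk0 _ hs, Units.mk0 _ hu,
      (B : Matrix (Fin 3) (Fin 3) k) 1 0, (B : Matrix (Fin 3) (Fin 3) k) 2 1), ?_⟩
    obtain ⟨h1, h2, h3, h4, h5⟩ := hB
    ext : 1
    apply Units.ext
    rw [stmt7_Phi_coe]
    funext i j
    fin_cases i <;> fin_cases j <;>
      simp [stmt7_mat, Units.val_mk0] <;>
      first
        | rfl
        | linear_combination h1 | linear_combination -h1
        | linear_combination h2 | linear_combination -h2
        | linear_combination h3 | linear_combination -h3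
        | linear_combination h4 | linear_combination -h4
        | linear_combination h5 | linear_combination -h5



/-- Scalar matrices as units. -/
def stmt7_scal : kˣ →* GL (Fin 3) k := Units.map (Matrix.scalar (Fin 3)).toMonoidHom

lemma stmt7_scal_coe (a : kˣ) :
    (stmt7_scal a : Matrix (Fin 3) (Fin 3) k) = Matrix.scalar (Fin 3) (a : k) := rfl

lemma stmt7_scal_mem_center (a : kˣ) :
    stmt7_scal a ∈ Subgroup.center (GL (Fin 3) k) := by
  rw [Subgroup.mem_center_iff]
  intro g
  apply Units.ext
  rw [Units.val_mul, Units.val_mul, stmt7_scal_coe]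
  exact (Matrix.scalar_commute (a : k) (fun r => mul_comm _ r) _).symm

/-- A transvection unit. -/
def stmt7_T (i j : Fin 3) (hij : i ≠ j) : GL (Fin 3) k where
  val := 1 + Matrix.single i j 1
  inv := 1 - Matrix.single i j 1
  val_inv := by
    rw [mul_sub, mul_one, add_mul, one_mul,
      Matrix.single_mul_single_of_ne _ _ _ _ (Ne.symm hij)]
    abel
  inv_val := by
    rw [sub_mul, one_mul, mul_add, mul_one,
      Matrix.single_mul_single_of_ne _ _ _ _ (Ne.symm hij)]
    abel

lemma stmt7_center_scalar {Z : GL (Fin 3) k} (hZ : Z ∈ Subgroup.center (GL (Fin 3) k)) :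
    (Z : Matrix (Fin 3) (Fin 3) k) = Matrix.scalar (Fin 3) ((Z : Matrix (Fin 3) (Fin 3) k) 0 0)
      := by
  rw [Subgroup.mem_center_iff] at hZ
  have hcomm : ∀ (i j : Fin 3) (hij : i ≠ j),
      (Z : Matrix (Fin 3) (Fin 3) k) * Matrix.single i j 1
        = Matrix.single i j 1 * (Z : Matrix (Fin 3) (Fin 3) k) := by
    intro i j hij
    have := congrArg Units.val (hZ (stmt7_T i j hij))
    rw [Units.val_mul, Units.val_mul] at this
    change (1 + Matrix.single i j 1) * _ = _ * (1 + Matrix.single i j 1) at this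
    rw [add_mul, one_mul, mul_add, mul_one] at this
    have := add_left_cancel this
    exact this.symm
  have hoff : ∀ (i a : Fin 3), a ≠ i → (Z : Matrix (Fin 3) (Fin 3) k) a i = 0 := by
    intro i a hai
    obtain ⟨j, hj⟩ : ∃ j : Fin 3, i ≠ j := by
      fin_cases i
      · exact ⟨1, by decide⟩
      · exact ⟨0, by decide⟩
      · exact ⟨0, by decide⟩
    have h := hcomm i j hj
    have h2 := congrFun (congrFun h a) j
    rw [Matrix.mul_single_apply_same,
      Matrix.single_mul_apply_of_ne _ _ _ _ _ hai] at h2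
    simpa using h2
  have hdiag : ∀ (i j : Fin 3), i ≠ j →
      (Z : Matrix (Fin 3) (Fin 3) k) i i = (Z : Matrix (Fin 3) (Fin 3) k) j j := by
    intro i j hij
    have h := hcomm i j hij
    have h2 := congrFun (congrFun h i) j
    rw [Matrix.mul_single_apply_same,
      Matrix.single_mul_apply_same] at h2
    simpa using h2
  funext a b
  rw [Matrix.scalar_apply, Matrix.diagonal_apply]
  rcases eq_or_ne a b with rfl | hab
  · simp only [if_pos rfl]
    rcases eq_or_ne a 0 with rfl | ha
    · rfl
    · exact hdiag a 0 ha
  · rw [if_neg hab]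
    exact hoff b a hab

lemma stmt7_comp (B C : GL (Fin 3) k) (v : Fin 3 → F) :
    (((B * C : GL (Fin 3) k) : Matrix (Fin 3) (Fin 3) k).map (algebraMap k F)).mulVec v
      = ((B : Matrix (Fin 3) (Fin 3) k).map (algebraMap k F)).mulVec
        (((C : Matrix (Fin 3) (Fin 3) k).map (algebraMap k F)).mulVec v) := by
  rw [stmt7_mapmul, Matrix.mulVec_mulVec]

lemma stmt7_orbit (τ : F) :
    Set.ncard {S : Set (Fin 3 → F) | ∃ B : GL (Fin 3) k,
        S = {w | ∃ c : F, c ≠ 0 ∧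
          w = c • ((B : Matrix (Fin 3) (Fin 3) k).map (algebraMap k F)).mulVec ![1, 1, τ]}}
      = Nat.card (GL (Fin 3) k ⧸ (stmt7_H τ : Subgroup (GL (Fin 3) k))) := by
  classical
  set f : GL (Fin 3) k → Set (Fin 3 → F) := fun B =>
    {w | ∃ c : F, c ≠ 0 ∧
      w = c • ((B : Matrix (Fin 3) (Fin 3) k).map (algebraMap k F)).mulVec ![1, 1, τ]} with hf
  have hcoset : ∀ B B' : GL (Fin 3) k, B⁻¹ * B' ∈ stmt7_H τ → f B = f B' := by
    intro B B' hmem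
    obtain ⟨d, hd⟩ := (stmt7_mem_H τ _).mp hmem
    have hd0 : d ≠ 0 := stmt7_c_ne τ _ d hd
    have hB' : ((B' : Matrix (Fin 3) (Fin 3) k).map (algebraMap k F)).mulVec ![1, 1, τ]
        = d • ((B : Matrix (Fin 3) (Fin 3) k).map (algebraMap k F)).mulVec ![1, 1, τ] := by
      have : B' = B * (B⁻¹ * B') := by group
      rw [this, stmt7_comp, hd, Matrix.mulVec_smul]
    ext w
    simp only [hf, Set.mem_setOf_eq]
    constructor
    · rintro ⟨c, hc0, rfl⟩
      exact ⟨c * d⁻¹, by simp [hc0, hd0], by rw [hB', smul_smul,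
        mul_assoc, inv_mul_cancel₀ hd0, mul_one]⟩
    · rintro ⟨c, hc0, rfl⟩
      exact ⟨c * d, by simp [hc0, hd0], by rw [hB', smul_smul]⟩
  have hcoset' : ∀ B B' : GL (Fin 3) k, f B = f B' → B⁻¹ * B' ∈ stmt7_H τ := by
    intro B B' h
    have hmem1 : ((B' : Matrix (Fin 3) (Fin 3) k).map (algebraMap k F)).mulVec ![1, 1, τ] ∈ f B' :=
      ⟨1, one_ne_zero, (one_smul _ _).symm⟩
    rw [← h] at hmem1
    obtain ⟨c, hc0, hw⟩ := hmem1
    rw [stmt7_mem_H τ]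
    refine ⟨c, ?_⟩
    have : (((B⁻¹ * B' : GL (Fin 3) k) : Matrix (Fin 3) (Fin 3) k).map
        (algebraMap k F)).mulVec ![1, 1, τ]
        = ((B⁻¹ : GL (Fin 3) k) : Matrix (Fin 3) (Fin 3) k).map (algebraMap k F) *ᵥ
          (c • ((B : Matrix (Fin 3) (Fin 3) k).map (algebraMap k F)).mulVec ![1, 1, τ]) := by
      rw [stmt7_comp, ← hw]
    rw [this, Matrix.mulVec_smul, Matrix.mulVec_mulVec, ← Matrix.map_mul, ← Units.val_mul,
      inv_mul_cancel, Units.val_one, Matrix.map_one _ (map_zero _) (map_one _),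
      Matrix.one_mulVec]
  have hsetr : {S : Set (Fin 3 → F) | ∃ B : GL (Fin 3) k, S = f B} = Set.range f := by
    ext S; exact ⟨fun ⟨B, hB⟩ => ⟨B, hB.symm⟩, fun ⟨B, hB⟩ => ⟨B, hB.symm⟩⟩
  have hlift : ∀ a b : GL (Fin 3) k, (QuotientGroup.leftRel (stmt7_H τ)) a b → f a = f b := by
    intro a b hab
    exact hcoset a b ((QuotientGroup.leftRel_apply).mp hab)
  set fbar : (GL (Fin 3) k ⧸ (stmt7_H τ : Subgroup (GL (Fin 3) k))) → Set (Fin 3 → F) :=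
    Quotient.lift f hlift with hfbar
  have hinj : Function.Injective fbar := by
    intro x y
    induction x using Quotient.ind
    induction y using Quotient.ind
    intro h
    exact Quotient.sound ((QuotientGroup.leftRel_apply).mpr (hcoset' _ _ h))
  have hrange : Set.range fbar = Set.range f := by
    ext S
    constructor
    · rintro ⟨q, rfl⟩
      induction q using Quotient.ind
      exact ⟨_, rfl⟩
    · rintro ⟨B, rfl⟩
      exact ⟨Quotient.mk _ B, rfl⟩
  calc Set.ncard {S : Set (Fin 3 → F) | ∃ B : GL (Fin 3) k, S = f B}
      = Set.ncard (Set.range fbar) := by rw [hsetr, hrange]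
    _ = Nat.card (Set.range fbar) := (Nat.card_coe_set_eq _).symm
    _ = Nat.card (GL (Fin 3) k ⧸ (stmt7_H τ : Subgroup (GL (Fin 3) k))) :=
        (Nat.card_congr (Equiv.ofInjective fbar hinj)).symm


end
/-- The stabilizer in PGL(3,q) of the point P = (1,1,τ) of PG(2,q^3),
where τ ∉ GF(q), has order q^2(q-1); hence the orbit of P under PGL(3,q) has size
q(q^3-1)(q+1). Orbit points are recorded as full sets of nonzero scalar multiples of a
representative vector. -/
theorem stmt7 (p n q : ℕ) (hp : p.Prime) (hn : 0 < n) (hq : q = p ^ n)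
    (k F : Type) [Field k] [Field F] [Algebra k F] [Fintype k] [Fintype F]
    (hk : Fintype.card k = q) (hF : Fintype.card F = q ^ 3)
    (τ : F) (hτ : τ ∉ Set.range (algebraMap k F)) :
    ∃ H : Subgroup (GL (Fin 3) k),
      (∀ B : GL (Fin 3) k, B ∈ H ↔ ∃ c : F,
        ((B : Matrix (Fin 3) (Fin 3) k).map (algebraMap k F)).mulVec ![1, 1, τ]
          = c • ![1, 1, τ]) ∧
      Nat.card (Subgroup.map (QuotientGroup.mk' (Subgroup.center (GL (Fin 3) k))) H)
        = q ^ 2 * (q - 1) ∧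
      Set.ncard {S : Set (Fin 3 → F) | ∃ B : GL (Fin 3) k,
          S = {w | ∃ c : F, c ≠ 0 ∧
            w = c • ((B : Matrix (Fin 3) (Fin 3) k).map (algebraMap k F)).mulVec ![1, 1, τ]}}
        = q * (q ^ 3 - 1) * (q + 1) := by
  classical
  have key := stmt7_key p n q hp hn hq k F hk hF τ hτ
  have hmem : ∀ B : GL (Fin 3) k, B ∈ stmt7_H τ ↔ stmt7_cond (B : Matrix (Fin 3) (Fin 3) k) :=
    fun B => (stmt7_mem_H τ B).trans (stmt7_cond_iff k F τ key _)
  have hq2 : 2 ≤ q := hq ▸ Nat.one_lt_pow hn.ne' hp.one_lt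
  have e1 : (kˣ × kˣ × k × k) ≃ ↥(stmt7_H τ : Subgroup (GL (Fin 3) k)) :=
    stmt7_equiv.trans (Equiv.subtypeEquivRight (fun B => (hmem B).symm))
  have cardH : Nat.card ↥(stmt7_H τ : Subgroup (GL (Fin 3) k))
      = (q - 1) * ((q - 1) * (q * q)) := by
    rw [← Nat.card_congr e1, Nat.card_prod, Nat.card_prod, Nat.card_prod]
    simp [Nat.card_eq_fintype_card, Fintype.card_units, hk]
  have hscalH : ∀ a : kˣ, stmt7_scal a ∈ (stmt7_H τ : Subgroup (GL (Fin 3) k)) := by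
    intro a
    rw [hmem]
    refine ⟨?_, ?_, ?_, ?_, ?_⟩ <;>
      simp [stmt7_scal_coe, Matrix.scalar_apply, Matrix.diagonal_apply]
  set K := (Subgroup.center (GL (Fin 3) k)).subgroupOf (stmt7_H τ : Subgroup (GL (Fin 3) k))
    with hK
  have eK : Function.Bijective (fun a : kˣ =>
      (⟨⟨stmt7_scal a, hscalH a⟩, by
        rw [hK, Subgroup.mem_subgroupOf]; exact stmt7_scal_mem_center a⟩ : ↥K)) := by
    constructor
    · intro a a' h
      have h2 : (stmt7_scal a : Matrix (Fin 3) (Fin 3) k) = stmt7_scal a' :=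
        congrArg (fun z : ↥K =>
          (((z : ↥(stmt7_H τ : Subgroup (GL (Fin 3) k))) : GL (Fin 3) k)
            : Matrix (Fin 3) (Fin 3) k)) h
      rw [stmt7_scal_coe, stmt7_scal_coe] at h2
      have h3 := congrFun (congrFun h2 0) 0
      simp [Matrix.scalar_apply, Matrix.diagonal_apply] at h3
      exact Units.ext h3
    · rintro ⟨⟨Z, hZH⟩, hZc⟩
      rw [hK, Subgroup.mem_subgroupOf] at hZc
      have hZs := stmt7_center_scalar hZc
      have hdet : IsUnit (Z : Matrix (Fin 3) (Fin 3) k).det :=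
        (Matrix.isUnit_iff_isUnit_det _).mp Z.isUnit
      have h00 : (Z : Matrix (Fin 3) (Fin 3) k) 0 0 ≠ 0 := by
        intro h0
        rw [hZs, h0, Matrix.scalar_apply, Matrix.det_diagonal] at hdet
        simp at hdet
      refine ⟨Units.mk0 _ h00, ?_⟩
      apply Subtype.ext
      apply Subtype.ext
      apply Units.ext
      rw [stmt7_scal_coe]
      simp only [Units.val_mk0]
      exact hZs.symm
  have cardK : Nat.card ↥K = q - 1 := by
    rw [← Nat.card_eq_of_bijective _ eK, Nat.card_eq_fintype_card, Fintype.card_units, hk]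
  set ρ : ↥(stmt7_H τ : Subgroup (GL (Fin 3) k)) →*
      (GL (Fin 3) k) ⧸ Subgroup.center (GL (Fin 3) k) :=
    (QuotientGroup.mk' (Subgroup.center (GL (Fin 3) k))).comp
      (stmt7_H τ : Subgroup (GL (Fin 3) k)).subtype with hρ
  have hker : ρ.ker = K := by
    rw [hρ, ← MonoidHom.comap_ker, QuotientGroup.ker_mk']
    rfl
  have hrange : ρ.range
      = Subgroup.map (QuotientGroup.mk' (Subgroup.center (GL (Fin 3) k))) (stmt7_H τ) := by
    ext x
    simp only [MonoidHom.mem_range, Subgroup.mem_map, hρ, MonoidHom.comp_apply]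
    constructor
    · rintro ⟨y, rfl⟩; exact ⟨y, y.2, rfl⟩
    · rintro ⟨y, hy, rfl⟩; exact ⟨⟨y, hy⟩, rfl⟩
  have h1 : Nat.card ↥(stmt7_H τ : Subgroup (GL (Fin 3) k))
      = Nat.card (↥(stmt7_H τ : Subgroup (GL (Fin 3) k)) ⧸ ρ.ker) * Nat.card ρ.ker :=
    Subgroup.card_eq_card_quotient_mul_card_subgroup _
  have h2 : Nat.card (↥(stmt7_H τ : Subgroup (GL (Fin 3) k)) ⧸ ρ.ker) = Nat.card ρ.range :=
    Nat.card_congr (QuotientGroup.quotientKerEquivRange ρ).toEquiv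
  have hmapcard : Nat.card
      (Subgroup.map (QuotientGroup.mk' (Subgroup.center (GL (Fin 3) k))) (stmt7_H τ))
      = q ^ 2 * (q - 1) := by
    rw [← hrange]
    apply Nat.eq_of_mul_eq_mul_right (show 0 < q - 1 by omega)
    have hkercard : Nat.card ρ.ker = q - 1 := by rw [hker, cardK]
    calc Nat.card ρ.range * (q - 1) = Nat.card ρ.range * Nat.card ρ.ker := by rw [hkercard]
      _ = Nat.card (↥(stmt7_H τ : Subgroup (GL (Fin 3) k)) ⧸ ρ.ker) * Nat.card ρ.ker := by
          rw [h2]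
      _ = (q - 1) * ((q - 1) * (q * q)) := by rw [← h1, cardH]
      _ = q ^ 2 * (q - 1) * (q - 1) := by ring
  have h3 : Nat.card (GL (Fin 3) k)
      = Nat.card (GL (Fin 3) k ⧸ (stmt7_H τ : Subgroup (GL (Fin 3) k)))
        * Nat.card ↥(stmt7_H τ : Subgroup (GL (Fin 3) k)) :=
    Subgroup.card_eq_card_quotient_mul_card_subgroup _
  have hGL : Nat.card (GL (Fin 3) k) = (q ^ 3 - 1) * ((q ^ 3 - q) * (q ^ 3 - q ^ 2)) := by
    rw [Matrix.card_GL_field 3, hk, Fin.prod_univ_three]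
    norm_num [mul_assoc]
  have hid : q * (q ^ 3 - 1) * (q + 1) * ((q - 1) * ((q - 1) * (q * q)))
      = (q ^ 3 - 1) * ((q ^ 3 - q) * (q ^ 3 - q ^ 2)) := by
    have hb1 : 1 ≤ q := by omega
    have hb2 : q ≤ q ^ 3 := Nat.le_self_pow (by norm_num) q
    have hb3 : q ^ 2 ≤ q ^ 3 := Nat.pow_le_pow_right (by omega) (by norm_num)
    have hb4 : 1 ≤ q ^ 3 := Nat.one_le_pow _ _ (by omega)
    zify [hb1, hb2, hb3, hb4]
    ring
  have hquot : Nat.card (GL (Fin 3) k ⧸ (stmt7_H τ : Subgroup (GL (Fin 3) k)))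
      = q * (q ^ 3 - 1) * (q + 1) := by
    apply Nat.eq_of_mul_eq_mul_right
      (show 0 < (q - 1) * ((q - 1) * (q * q)) by
        have : 0 < q - 1 := by omega
        have : 0 < q := by omega
        positivity)
    rw [← cardH, ← h3, hGL, ← hid, cardH]
  refine ⟨stmt7_H τ, fun B => Iff.rfl, hmapcard, ?_⟩
  rw [stmt7_orbit τ, hquot]
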